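/- arXiv:1404.0002 — 2 statements merged into one kernel-verified Lean document; each statement's English description precedes it below -/
import Mathlib

section
/- For every z ∈ ℤ^n, the z-th graded part A_n^{(z)} equals both of the sets {f(θ) ∘ X^{e(z)} ∘ D^{w(z)} : f ∈ K[t_1,…,t_n]} and {X^{e(z)} ∘ D^{w(z)} ∘ f(θ) : f ∈ K[t_1,…,t_n]}; that is, A_n^{(z)} is a cyclic K[θ_1,…,θ_n]-bimodule generated by the single monomial X^{e(z)} ∘ D^{w(z)}. -/
open MvPolynomial

/-- Multiplication by the variable `x i`, as a `K`-linear endomorphism of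
`K[x_1,…,x_n]`. -/
noncomputable def Xop (K : Type) [Field K] {n : ℕ} (i : Fin n) :
    Module.End K (MvPolynomial (Fin n) K) :=
  LinearMap.mulLeft K (X i)

/-- The `i`-th partial derivative, as a `K`-linear endomorphism of `K[x_1,…,x_n]`. -/
noncomputable def Dop (K : Type) [Field K] {n : ℕ} (i : Fin n) :
    Module.End K (MvPolynomial (Fin n) K) :=
  (pderiv i).toLinearMap

/-- `X^a := X_1^{a_1} ∘ ⋯ ∘ X_n^{a_n}`. -/
noncomputable def Xpow (K : Type) [Field K] {n : ℕ} (a : Fin n → ℕ) :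
    Module.End K (MvPolynomial (Fin n) K) :=
  (List.ofFn fun i => Xop K i ^ a i).prod

/-- `D^b := D_1^{b_1} ∘ ⋯ ∘ D_n^{b_n}`. -/
noncomputable def Dpow (K : Type) [Field K] {n : ℕ} (b : Fin n → ℕ) :
    Module.End K (MvPolynomial (Fin n) K) :=
  (List.ofFn fun i => Dop K i ^ b i).prod

/-- The `n`-th Weyl algebra `A_n`, realized as the `K`-subalgebra of
`End_K(K[x_1,…,x_n])` generated by `X_1,…,X_n, D_1,…,D_n`. -/
noncomputable def WeylAlg (K : Type) [Field K] (n : ℕ) :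
    Subalgebra K (Module.End K (MvPolynomial (Fin n) K)) :=
  Algebra.adjoin K (Set.range (Xop K (n := n)) ∪ Set.range (Dop K (n := n)))

/-- The `i`-th Euler operator `θ_i := X_i ∘ D_i`. -/
noncomputable def thetaOp (K : Type) [Field K] {n : ℕ} (i : Fin n) :
    Module.End K (MvPolynomial (Fin n) K) :=
  Xop K i * Dop K i

/-- Evaluation `f ↦ f(θ_1,…,θ_n)` of a polynomial `f ∈ K[t_1,…,t_n]` at the (pairwise
commuting) Euler operators. -/
noncomputable def thetaEval (K : Type) [Field K] {n : ℕ}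
    (f : MvPolynomial (Fin n) K) : Module.End K (MvPolynomial (Fin n) K) :=
  ∑ m ∈ f.support, f.coeff m • (List.ofFn fun i => thetaOp K i ^ m i).prod

/-- The `z`-th graded part `A_n^{(z)}`: the `K`-linear span of the operators
`X^a ∘ D^b` with `b − a = z` componentwise. -/
noncomputable def gradePart (K : Type) [Field K] {n : ℕ} (z : Fin n → ℤ) :
    Submodule K (Module.End K (MvPolynomial (Fin n) K)) :=
  Submodule.span K
    {F | ∃ a b : Fin n → ℕ, (∀ i, (b i : ℤ) - (a i : ℤ) = z i) ∧ F = Xpow K a * Dpow K b}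

/-- `e(z)_i := −z_i` if `z_i < 0`, and `0` otherwise. -/
def ez {n : ℕ} (z : Fin n → ℤ) : Fin n → ℕ := fun i => (-(z i)).toNat

/-- `w(z)_i := z_i` if `z_i > 0`, and `0` otherwise. -/
def wz {n : ℕ} (z : Fin n → ℤ) : Fin n → ℕ := fun i => (z i).toNat


section ListHelpers
variable {M : Type*} [Monoid M]

lemma ofFn_prod_mul : ∀ {n : ℕ} (F G : Fin n → M),
    (∀ i j, i ≠ j → Commute (G i) (F j)) →
    (List.ofFn F).prod * (List.ofFn G).prod = (List.ofFn fun i => F i * G i).prod := by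
  intro n
  induction n with
  | zero => intro F G _; simp
  | succ n ih =>
    intro F G h
    rw [List.ofFn_succ, List.ofFn_succ, List.ofFn_succ, List.prod_cons, List.prod_cons,
      List.prod_cons]
    have hc : Commute (G 0) ((List.ofFn fun i : Fin n => F i.succ).prod) := by
      apply Commute.list_prod_right
      intro x hx
      rw [List.mem_ofFn] at hx
      obtain ⟨j, rfl⟩ := hx
      exact h _ _ (Fin.succ_ne_zero j).symm
    rw [mul_assoc (F 0), ← mul_assoc _ (G 0), ← hc.eq, mul_assoc (G 0), ← mul_assoc (F 0) (G 0),
      ih _ _ (fun i j hij => h i.succ j.succ (fun hh => hij (Fin.succ_injective _ hh)))]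

lemma ofFn_prod_swap_right : ∀ {n : ℕ} (F : Fin n → M) (A B : M) (i0 : Fin n),
    (∀ j, j ≠ i0 → Commute A (F j)) → (∀ j, j ≠ i0 → Commute B (F j)) →
    (F i0 * A = B * F i0) →
    (List.ofFn F).prod * A = B * (List.ofFn F).prod := by
  intro n
  induction n with
  | zero => intro _ _ _ i0; exact i0.elim0
  | succ n ih =>
    intro F A B i0 hA hB hrel
    rw [List.ofFn_succ, List.prod_cons]
    rcases Fin.eq_zero_or_eq_succ i0 with h0 | ⟨k, rfl⟩
    · subst h0
      have hAP : Commute A ((List.ofFn fun i : Fin n => F i.succ).prod) := by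
        apply Commute.list_prod_right
        intro x hx
        rw [List.mem_ofFn] at hx
        obtain ⟨j, rfl⟩ := hx
        exact hA _ (Fin.succ_ne_zero j)
      rw [mul_assoc, ← hAP.eq, ← mul_assoc, hrel, mul_assoc]
    · have h0A : Commute A (F 0) := hA 0 (Fin.succ_ne_zero k).symm
      have h0B : Commute B (F 0) := hB 0 (Fin.succ_ne_zero k).symm
      have ihx := ih (fun i => F i.succ) A B k
        (fun j hj => hA j.succ (fun hh => hj (Fin.succ_injective _ hh)))
        (fun j hj => hB j.succ (fun hh => hj (Fin.succ_injective _ hh))) hrel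
      rw [mul_assoc, ihx, ← mul_assoc, ← h0B.eq, mul_assoc]

lemma ofFn_prod_swap_left : ∀ {n : ℕ} (F : Fin n → M) (A B : M) (i0 : Fin n),
    (∀ j, j ≠ i0 → Commute A (F j)) → (∀ j, j ≠ i0 → Commute B (F j)) →
    (A * F i0 = F i0 * B) →
    A * (List.ofFn F).prod = (List.ofFn F).prod * B := by
  intro n
  induction n with
  | zero => intro _ _ _ i0; exact i0.elim0
  | succ n ih =>
    intro F A B i0 hA hB hrel
    rw [List.ofFn_succ, List.prod_cons]
    rcases Fin.eq_zero_or_eq_succ i0 with h0 | ⟨k, rfl⟩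
    · subst h0
      have hBP : Commute B ((List.ofFn fun i : Fin n => F i.succ).prod) := by
        apply Commute.list_prod_right
        intro x hx
        rw [List.mem_ofFn] at hx
        obtain ⟨j, rfl⟩ := hx
        exact hB _ (Fin.succ_ne_zero j)
      rw [← mul_assoc, hrel, mul_assoc, hBP.eq, ← mul_assoc]
    · have h0A : Commute A (F 0) := hA 0 (Fin.succ_ne_zero k).symm
      have ihx := ih (fun i => F i.succ) A B k
        (fun j hj => hA j.succ (fun hh => hj (Fin.succ_injective _ hh)))
        (fun j hj => hB j.succ (fun hh => hj (Fin.succ_injective _ hh))) hrel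
      rw [← mul_assoc, h0A.eq, mul_assoc, ihx, ← mul_assoc]

lemma ofFn_prod_single : ∀ {n : ℕ} (F : Fin n → M) (i0 : Fin n),
    (∀ j, j ≠ i0 → F j = 1) → (List.ofFn F).prod = F i0 := by
  intro n
  induction n with
  | zero => intro _ i0; exact i0.elim0
  | succ n ih =>
    intro F i0 h
    rw [List.ofFn_succ, List.prod_cons]
    rcases Fin.eq_zero_or_eq_succ i0 with h0 | ⟨k, rfl⟩
    · subst h0
      have : (List.ofFn fun i : Fin n => F i.succ).prod = 1 := by
        apply List.prod_eq_one
        intro x hx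
        rw [List.mem_ofFn] at hx
        obtain ⟨j, rfl⟩ := hx
        exact h _ (Fin.succ_ne_zero j)
      rw [this, mul_one]
    · rw [h 0 (Fin.succ_ne_zero k).symm, one_mul,
        ih _ k (fun j hj => h j.succ (fun hh => hj (Fin.succ_injective _ hh)))]

end ListHelpers

variable (K : Type) [Field K] {n : ℕ}

lemma dx_rel (i : Fin n) : Dop K i * Xop K i = Xop K i * Dop K i + 1 := by
  refine LinearMap.ext fun p => ?_
  simp only [Dop, Xop, Module.End.mul_apply, LinearMap.mulLeft_apply, Derivation.coeFn_coe,
    LinearMap.add_apply, Module.End.one_apply]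
  rw [pderiv_mul, pderiv_X_self]
  ring

lemma commute_XX (i j : Fin n) : Commute (Xop K i) (Xop K j) := by
  refine LinearMap.ext fun p => ?_
  simp only [Xop, Module.End.mul_apply, LinearMap.mulLeft_apply]
  ring

lemma pderiv_pderiv_comm (i j : Fin n) (p : MvPolynomial (Fin n) K) :
    pderiv i (pderiv j p) = pderiv j (pderiv i p) := by
  by_cases hij : i = j
  · subst hij; rfl
  · induction p using MvPolynomial.induction_on' with
    | monomial u a =>
      simp only [pderiv_monomial]
      rw [tsub_tsub, tsub_tsub, add_comm]
      congr 1
      have h1 : ((u - Finsupp.single j 1 : Fin n →₀ ℕ)) i = u i := by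
        rw [Finsupp.tsub_apply, Finsupp.single_apply, if_neg (Ne.symm hij), tsub_zero]
      have h2 : ((u - Finsupp.single i 1 : Fin n →₀ ℕ)) j = u j := by
        rw [Finsupp.tsub_apply, Finsupp.single_apply, if_neg hij, tsub_zero]
      rw [h1, h2]
      ring
    | add p q hp hq => simp [hp, hq]

lemma commute_DD (i j : Fin n) : Commute (Dop K i) (Dop K j) := by
  refine LinearMap.ext fun p => ?_
  simp only [Dop, Module.End.mul_apply, Derivation.coeFn_coe]
  exact pderiv_pderiv_comm K i j p

lemma commute_DX {i j : Fin n} (h : i ≠ j) : Commute (Dop K i) (Xop K j) := by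
  refine LinearMap.ext fun p => ?_
  simp only [Dop, Xop, Module.End.mul_apply, LinearMap.mulLeft_apply, Derivation.coeFn_coe]
  rw [pderiv_mul, pderiv_X_of_ne (Ne.symm h)]
  ring

lemma commute_X_theta {i j : Fin n} (h : j ≠ i) : Commute (Xop K j) (thetaOp K i) :=
  (commute_XX K j i).mul_right (commute_DX K (Ne.symm h)).symm

lemma commute_D_theta {i j : Fin n} (h : j ≠ i) : Commute (Dop K j) (thetaOp K i) :=
  (commute_DX K h).mul_right (commute_DD K j i)

lemma commute_theta_theta (i j : Fin n) : Commute (thetaOp K i) (thetaOp K j) := by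
  by_cases hij : i = j
  · subst hij; exact Commute.refl _
  · exact (commute_X_theta K hij).mul_left (commute_D_theta K hij)

lemma theta_X (i : Fin n) : thetaOp K i * Xop K i = Xop K i * (thetaOp K i + 1) := by
  rw [thetaOp, mul_assoc, dx_rel K i]

lemma X_theta (i : Fin n) : Xop K i * thetaOp K i = (thetaOp K i - 1) * Xop K i := by
  rw [sub_mul, one_mul, theta_X K i, mul_add, mul_one, add_sub_cancel_right]

lemma D_theta (i : Fin n) : Dop K i * thetaOp K i = (thetaOp K i + 1) * Dop K i := by
  rw [thetaOp, ← mul_assoc, dx_rel K i]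

lemma theta_D (i : Fin n) : thetaOp K i * Dop K i = Dop K i * (thetaOp K i - 1) := by
  rw [mul_sub, mul_one, D_theta K i, add_mul, one_mul, add_sub_cancel_right]

abbrev EndK (K : Type) [Field K] (n : ℕ) := Module.End K (MvPolynomial (Fin n) K)

lemma Xpow_theta_single (i : Fin n) (k : ℕ) :
    Xop K i ^ k * thetaOp K i = (thetaOp K i - (k : EndK K n)) * Xop K i ^ k := by
  induction k with
  | zero => simp
  | succ k ih =>
    rw [pow_succ, mul_assoc, X_theta K i, ← mul_assoc, mul_sub, mul_one, ih]
    push_cast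
    noncomm_ring
    simp only [add_mul]
    noncomm_ring

lemma theta_Xpow_single (i : Fin n) (k : ℕ) :
    thetaOp K i * Xop K i ^ k = Xop K i ^ k * (thetaOp K i + (k : EndK K n)) := by
  induction k with
  | zero => simp
  | succ k ih =>
    rw [pow_succ, ← mul_assoc, ih, mul_assoc, add_mul, theta_X K i,
      (Nat.cast_commute k (Xop K i)).eq]
    push_cast
    noncomm_ring

lemma Dpow_theta_single (i : Fin n) (k : ℕ) :
    Dop K i ^ k * thetaOp K i = (thetaOp K i + (k : EndK K n)) * Dop K i ^ k := by
  induction k with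
  | zero => simp
  | succ k ih =>
    rw [pow_succ, mul_assoc, D_theta K i, ← mul_assoc, mul_add, mul_one, ih]
    push_cast
    noncomm_ring

lemma theta_Dpow_single (i : Fin n) (k : ℕ) :
    thetaOp K i * Dop K i ^ k = Dop K i ^ k * (thetaOp K i - (k : EndK K n)) := by
  induction k with
  | zero => simp
  | succ k ih =>
    rw [pow_succ, ← mul_assoc, ih, mul_assoc, sub_mul, theta_D K i,
      (Nat.cast_commute k (Dop K i)).eq]
    push_cast
    noncomm_ring
    simp only [mul_add, mul_smul_comm]

noncomputable def Xpow' (a : Fin n → ℕ) : EndK K n := (List.ofFn fun i => Xop K i ^ a i).prod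
noncomputable def Dpow' (b : Fin n → ℕ) : EndK K n := (List.ofFn fun i => Dop K i ^ b i).prod
noncomputable def Tf (m : Fin n → ℕ) : EndK K n := (List.ofFn fun i => thetaOp K i ^ m i).prod

lemma commute_theta_Xpow {i j : Fin n} (h : j ≠ i) (k : ℕ) :
    Commute (thetaOp K i) (Xop K j ^ k) :=
  ((commute_X_theta K h).symm).pow_right k

lemma commute_theta_Dpow {i j : Fin n} (h : j ≠ i) (k : ℕ) :
    Commute (thetaOp K i) (Dop K j ^ k) :=
  ((commute_D_theta K h).symm).pow_right k

lemma Xpow_theta (a : Fin n → ℕ) (i : Fin n) :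
    Xpow' K a * thetaOp K i = (thetaOp K i - ((a i : ℕ) : EndK K n)) * Xpow' K a := by
  refine ofFn_prod_swap_right _ _ _ i
    (fun j hj => commute_theta_Xpow K hj _)
    (fun j hj => ((commute_theta_Xpow K hj _).sub_left ((Nat.cast_commute _ _).pow_right _)))
    (Xpow_theta_single K i (a i))

lemma theta_Xpow (a : Fin n → ℕ) (i : Fin n) :
    thetaOp K i * Xpow' K a = Xpow' K a * (thetaOp K i + ((a i : ℕ) : EndK K n)) := by
  refine ofFn_prod_swap_left _ _ _ i
    (fun j hj => commute_theta_Xpow K hj _)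
    (fun j hj => ((commute_theta_Xpow K hj _).add_left ((Nat.cast_commute _ _).pow_right _)))
    (theta_Xpow_single K i (a i))

lemma Dpow_theta (b : Fin n → ℕ) (i : Fin n) :
    Dpow' K b * thetaOp K i = (thetaOp K i + ((b i : ℕ) : EndK K n)) * Dpow' K b := by
  refine ofFn_prod_swap_right _ _ _ i
    (fun j hj => commute_theta_Dpow K hj _)
    (fun j hj => ((commute_theta_Dpow K hj _).add_left ((Nat.cast_commute _ _).pow_right _)))
    (Dpow_theta_single K i (b i))

lemma theta_Dpow (b : Fin n → ℕ) (i : Fin n) :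
    thetaOp K i * Dpow' K b = Dpow' K b * (thetaOp K i - ((b i : ℕ) : EndK K n)) := by
  refine ofFn_prod_swap_left _ _ _ i
    (fun j hj => commute_theta_Dpow K hj _)
    (fun j hj => ((commute_theta_Dpow K hj _).sub_left ((Nat.cast_commute _ _).pow_right _)))
    (theta_Dpow_single K i (b i))

lemma Xpow_mul_Xpow (a c : Fin n → ℕ) : Xpow' K a * Xpow' K c = Xpow' K (a + c) := by
  rw [Xpow', Xpow', Xpow',
    ofFn_prod_mul _ _ (fun i j _ => (commute_XX K i j).pow_pow _ _)]
  simp only [Pi.add_apply, pow_add]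

lemma Dpow_mul_Dpow (a c : Fin n → ℕ) : Dpow' K a * Dpow' K c = Dpow' K (a + c) := by
  rw [Dpow', Dpow', Dpow',
    ofFn_prod_mul _ _ (fun i j _ => (commute_DD K i j).pow_pow _ _)]
  simp only [Pi.add_apply, pow_add]

lemma Tf_mul_Tf (a c : Fin n → ℕ) : Tf K a * Tf K c = Tf K (a + c) := by
  rw [Tf, Tf, Tf,
    ofFn_prod_mul _ _ (fun i j _ => (commute_theta_theta K i j).pow_pow _ _)]
  simp only [Pi.add_apply, pow_add]

lemma Xpow_mul_Dpow (c b : Fin n → ℕ) :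
    Xpow' K c * Dpow' K b = (List.ofFn fun i => Xop K i ^ c i * Dop K i ^ b i).prod := by
  rw [Xpow', Dpow',
    ofFn_prod_mul _ _ (fun i j h => ((commute_DX K h).pow_pow _ _))]

lemma Xpow_single (i : Fin n) : Xpow' K (Pi.single i 1) = Xop K i := by
  rw [Xpow']
  have := ofFn_prod_single (fun j => Xop K j ^ Pi.single i 1 j) i
    (fun j hj => by simp [Pi.single_eq_of_ne hj])
  rw [this]
  simp

lemma Dpow_single (i : Fin n) : Dpow' K (Pi.single i 1) = Dop K i := by
  rw [Dpow']
  have := ofFn_prod_single (fun j => Dop K j ^ Pi.single i 1 j) i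
    (fun j hj => by simp [Pi.single_eq_of_ne hj])
  rw [this]
  simp

lemma Tf_zero : Tf K (0 : Fin n → ℕ) = 1 := by
  rw [Tf]
  apply List.prod_eq_one
  intro x hx
  rw [List.mem_ofFn] at hx
  obtain ⟨j, rfl⟩ := hx
  exact pow_zero _

noncomputable def thetaEval' (f : MvPolynomial (Fin n) K) : EndK K n :=
  ∑ m ∈ f.support, f.coeff m • (List.ofFn fun i => thetaOp K i ^ m i).prod

lemma thetaEval_def (f : MvPolynomial (Fin n) K) :
    thetaEval' K f = ∑ m ∈ f.support, f.coeff m • Tf K ⇑m := rfl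

lemma thetaEval_sum_subset (f : MvPolynomial (Fin n) K) {S : Finset (Fin n →₀ ℕ)}
    (hS : f.support ⊆ S) :
    thetaEval' K f = ∑ m ∈ S, f.coeff m • Tf K ⇑m := by
  rw [thetaEval_def]
  exact Finset.sum_subset hS (fun m _ hm => by
    rw [MvPolynomial.notMem_support_iff.mp hm, zero_smul])

lemma thetaEval_add (f g : MvPolynomial (Fin n) K) :
    thetaEval' K (f + g) = thetaEval' K f + thetaEval' K g := by
  rw [thetaEval_sum_subset K (f + g) (MvPolynomial.support_add : (f + g).support ⊆ f.support ∪ g.support),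
    thetaEval_sum_subset K f (Finset.subset_union_left (s₂ := g.support)),
    thetaEval_sum_subset K g (Finset.subset_union_right (s₁ := f.support)),
    ← Finset.sum_add_distrib]
  apply Finset.sum_congr rfl
  intro m _
  rw [coeff_add, add_smul]

lemma thetaEval_smul (c : K) (f : MvPolynomial (Fin n) K) :
    thetaEval' K (c • f) = c • thetaEval' K f := by
  rw [thetaEval_sum_subset K (c • f) (MvPolynomial.support_smul : (c • f).support ⊆ f.support),
    thetaEval_def, Finset.smul_sum]
  apply Finset.sum_congr rfl
  intro m _
  rw [MvPolynomial.coeff_smul, smul_eq_mul, mul_smul]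

lemma thetaEval_zero : thetaEval' K (0 : MvPolynomial (Fin n) K) = 0 := by
  simp [thetaEval_def]

lemma thetaEval_monomial (m : Fin n →₀ ℕ) (c : K) :
    thetaEval' K (monomial m c) = c • Tf K ⇑m := by
  classical
  by_cases hc : c = 0
  · subst hc
    rw [monomial_zero, thetaEval_zero, zero_smul]
  · rw [thetaEval_def, support_monomial, if_neg hc, Finset.sum_singleton, coeff_monomial,
      if_pos rfl]

lemma thetaEval_mul (f g : MvPolynomial (Fin n) K) :
    thetaEval' K (f * g) = thetaEval' K f * thetaEval' K g := by
  induction f using MvPolynomial.induction_on' with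
  | add p q hp hq => rw [add_mul, thetaEval_add, thetaEval_add, hp, hq, add_mul]
  | monomial m c =>
    induction g using MvPolynomial.induction_on' with
    | add p q hp hq => rw [mul_add, thetaEval_add, thetaEval_add, hp, hq, mul_add]
    | monomial m' c' =>
      rw [monomial_mul, thetaEval_monomial, thetaEval_monomial, thetaEval_monomial,
        smul_mul_smul_comm, Tf_mul_Tf, Finsupp.coe_add]

lemma thetaEval_one : thetaEval' K (1 : MvPolynomial (Fin n) K) = 1 := by
  have : (1 : MvPolynomial (Fin n) K) = monomial 0 1 := by simp
  rw [this, thetaEval_monomial, one_smul]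
  rw [show ⇑(0 : Fin n →₀ ℕ) = (0 : Fin n → ℕ) from rfl, Tf_zero]

lemma thetaEval_C (c : K) : thetaEval' K (C c : MvPolynomial (Fin n) K) = c • 1 := by
  have : (C c : MvPolynomial (Fin n) K) = monomial 0 c := rfl
  rw [this, thetaEval_monomial,
    show ⇑(0 : Fin n →₀ ℕ) = (0 : Fin n → ℕ) from rfl, Tf_zero]

lemma thetaEval_X (i : Fin n) : thetaEval' K (X i) = thetaOp K i := by
  have : (X i : MvPolynomial (Fin n) K) = monomial (Finsupp.single i 1) 1 := rfl
  rw [this, thetaEval_monomial, one_smul, Tf]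
  have := ofFn_prod_single (fun j => thetaOp K j ^ (Finsupp.single i 1) j) i
    (fun j hj => by simp [Finsupp.single_apply, (Ne.symm hj : ¬ i = j)])
  rw [this]
  simp

lemma thetaEval_sub (f g : MvPolynomial (Fin n) K) :
    thetaEval' K (f - g) = thetaEval' K f - thetaEval' K g := by
  have : f - g = f + (-1 : K) • g := by
    rw [neg_one_smul]; ring
  rw [this, thetaEval_add, thetaEval_smul]
  module

lemma thetaEval_list_prod (l : List (MvPolynomial (Fin n) K)) :
    thetaEval' K l.prod = (l.map (thetaEval' K)).prod := by
  induction l with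
  | nil => exact thetaEval_one K
  | cons x xs ih => rw [List.prod_cons, thetaEval_mul, ih, List.map_cons, List.prod_cons]

lemma thetaEval_natCast_smul (k : ℕ) :
    ((k : K) • (1 : EndK K n)) = (k : EndK K n) := by
  rw [Nat.cast_smul_eq_nsmul, nsmul_eq_mul, mul_one]

noncomputable def descM (i : Fin n) (c : ℕ) : MvPolynomial (Fin n) K :=
  ∏ j ∈ Finset.range c, (X i - C (j : K))

lemma XD_pow_eq (i : Fin n) (c : ℕ) :
    Xop K i ^ c * Dop K i ^ c = thetaEval' K (descM K i c) := by
  induction c with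
  | zero => simp [descM, thetaEval_one]
  | succ c ih =>
    have key : Xop K i ^ (c + 1) * Dop K i ^ (c + 1)
        = (Xop K i ^ c * Dop K i ^ c) * (thetaOp K i - (c : EndK K n)) := by
      rw [pow_succ, pow_succ']
      calc Xop K i ^ c * Xop K i * (Dop K i * Dop K i ^ c)
          = Xop K i ^ c * (thetaOp K i * Dop K i ^ c) := by
            rw [thetaOp]; noncomm_ring
        _ = Xop K i ^ c * (Dop K i ^ c * (thetaOp K i - (c : EndK K n))) := by
            rw [theta_Dpow_single]
        _ = Xop K i ^ c * Dop K i ^ c * (thetaOp K i - (c : EndK K n)) := by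
            rw [mul_assoc]
    rw [key, ih,
      show descM K i (c + 1) = descM K i c * (X i - C (c : K)) from Finset.prod_range_succ _ _,
      thetaEval_mul, thetaEval_sub, thetaEval_X, thetaEval_C, thetaEval_natCast_smul]

lemma XcDc_eq (c : Fin n → ℕ) :
    Xpow' K c * Dpow' K c = thetaEval' K ((List.ofFn fun i => descM K i (c i)).prod) := by
  rw [Xpow_mul_Dpow, thetaEval_list_prod, List.map_ofFn]
  have : (thetaEval' K ∘ fun i => descM K i (c i)) = fun i => Xop K i ^ c i * Dop K i ^ c i := by
    funext i
    exact (XD_pow_eq K i (c i)).symm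
  rw [this]

lemma Xpow_thetaEval (e : Fin n → ℕ) (g : MvPolynomial (Fin n) K) :
    Xpow' K e * thetaEval' K g
      = thetaEval' K (aeval (fun i => X i - C ((e i : K))) g) * Xpow' K e := by
  induction g using MvPolynomial.induction_on with
  | C c =>
    rw [thetaEval_C, aeval_C, algebraMap_eq, thetaEval_C, smul_mul_assoc, mul_smul_comm,
      mul_one, one_mul]
  | add p q hp hq =>
    rw [map_add, thetaEval_add, thetaEval_add, mul_add, add_mul, hp, hq]
  | mul_X p i hp =>
    rw [map_mul, thetaEval_mul, thetaEval_mul, thetaEval_X, aeval_X, thetaEval_sub,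
      thetaEval_X, thetaEval_C, thetaEval_natCast_smul, ← mul_assoc, hp, mul_assoc,
      Xpow_theta, mul_assoc]

lemma thetaEval_Dpow (w : Fin n → ℕ) (g : MvPolynomial (Fin n) K) :
    thetaEval' K g * Dpow' K w
      = Dpow' K w * thetaEval' K (aeval (fun i => X i - C ((w i : K))) g) := by
  induction g using MvPolynomial.induction_on with
  | C c =>
    rw [thetaEval_C, aeval_C, algebraMap_eq, thetaEval_C, smul_mul_assoc, mul_smul_comm,
      mul_one, one_mul]
  | add p q hp hq =>
    rw [map_add, thetaEval_add, thetaEval_add, mul_add, add_mul, hp, hq]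
  | mul_X p i hp =>
    rw [map_mul, thetaEval_mul, thetaEval_mul, thetaEval_X, aeval_X, thetaEval_sub,
      thetaEval_X, thetaEval_C, thetaEval_natCast_smul, mul_assoc, theta_Dpow,
      ← mul_assoc, hp, mul_assoc]

noncomputable def gradePart' (z : Fin n → ℤ) : Submodule K (EndK K n) :=
  Submodule.span K
    {F | ∃ a b : Fin n → ℕ, (∀ i, (b i : ℤ) - (a i : ℤ) = z i) ∧ F = Xpow' K a * Dpow' K b}

lemma gen_mem (z : Fin n → ℤ) (a b : Fin n → ℕ) (h : ∀ i, (b i : ℤ) - (a i : ℤ) = z i) :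
    Xpow' K a * Dpow' K b ∈ gradePart' K z :=
  Submodule.subset_span ⟨a, b, h, rfl⟩

lemma core_id (a b : Fin n → ℕ) (i : Fin n) :
    Xpow' K a * thetaOp K i * Dpow' K b
      = Xpow' K (a + Pi.single i 1) * Dpow' K (Pi.single i 1 + b) := by
  rw [thetaOp, ← Xpow_single K i, ← Dpow_single K i, ← mul_assoc (Xpow' K a), Xpow_mul_Xpow,
    mul_assoc, Dpow_mul_Dpow]

lemma shifted_cond (z : Fin n → ℤ) (a b : Fin n → ℕ) (i : Fin n)
    (hab : ∀ i', (b i' : ℤ) - (a i' : ℤ) = z i') :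
    ∀ i', ((((Pi.single i 1 : Fin n → ℕ) + b) i' : ℤ)) - (((a + (Pi.single i 1 : Fin n → ℕ)) i' : ℤ)) = z i' := by
  intro i'
  have := hab i'
  simp only [Pi.add_apply, Pi.single_apply]
  split_ifs <;> push_cast <;> omega

lemma theta_mul_mem (z : Fin n → ℤ) (i : Fin n) {F : EndK K n} (hF : F ∈ gradePart' K z) :
    thetaOp K i * F ∈ gradePart' K z := by
  refine Submodule.span_induction ?_ ?_ ?_ ?_ hF
  · rintro F ⟨a, b, hab, rfl⟩
    have h1 : thetaOp K i * (Xpow' K a * Dpow' K b)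
        = Xpow' K (a + Pi.single i 1) * Dpow' K (Pi.single i 1 + b)
          + (a i) • (Xpow' K a * Dpow' K b) := by
      rw [← mul_assoc, theta_Xpow, mul_add, add_mul, core_id,
        ← (Nat.cast_commute ((a i : ℕ)) (Xpow' K a)).eq, mul_assoc, ← nsmul_eq_mul]
    rw [h1]
    exact add_mem (gen_mem K z _ _ (shifted_cond z a b i hab))
      (nsmul_mem (gen_mem K z a b hab) _)
  · rw [mul_zero]; exact zero_mem _
  · intro x y _ _ hx hy
    rw [mul_add]; exact add_mem hx hy
  · intro r x _ hx
    rw [mul_smul_comm]; exact Submodule.smul_mem _ _ hx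

lemma mul_theta_mem (z : Fin n → ℤ) (i : Fin n) {F : EndK K n} (hF : F ∈ gradePart' K z) :
    F * thetaOp K i ∈ gradePart' K z := by
  refine Submodule.span_induction ?_ ?_ ?_ ?_ hF
  · rintro F ⟨a, b, hab, rfl⟩
    have h1 : (Xpow' K a * Dpow' K b) * thetaOp K i
        = Xpow' K (a + Pi.single i 1) * Dpow' K (Pi.single i 1 + b)
          + (b i) • (Xpow' K a * Dpow' K b) := by
      rw [mul_assoc, Dpow_theta, add_mul, mul_add, ← mul_assoc, core_id, ← mul_assoc,
        ← (Nat.cast_commute ((b i : ℕ)) (Xpow' K a)).eq, mul_assoc, ← nsmul_eq_mul]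
    rw [h1]
    exact add_mem (gen_mem K z _ _ (shifted_cond z a b i hab))
      (nsmul_mem (gen_mem K z a b hab) _)
  · rw [zero_mul]; exact zero_mem _
  · intro x y _ _ hx hy
    rw [add_mul]; exact add_mem hx hy
  · intro r x _ hx
    rw [smul_mul_assoc]; exact Submodule.smul_mem _ _ hx

lemma theta_pow_mul_mem (z : Fin n → ℤ) (i : Fin n) (k : ℕ) {F : EndK K n}
    (hF : F ∈ gradePart' K z) : thetaOp K i ^ k * F ∈ gradePart' K z := by
  induction k with
  | zero => rw [pow_zero, one_mul]; exact hF
  | succ k ih => rw [pow_succ', mul_assoc]; exact theta_mul_mem K z i ih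

lemma mul_theta_pow_mem (z : Fin n → ℤ) (i : Fin n) (k : ℕ) {F : EndK K n}
    (hF : F ∈ gradePart' K z) : F * thetaOp K i ^ k ∈ gradePart' K z := by
  induction k with
  | zero => rw [pow_zero, mul_one]; exact hF
  | succ k ih => rw [pow_succ, ← mul_assoc]; exact mul_theta_mem K z i ih

lemma list_prod_mul_mem (z : Fin n → ℤ) :
    ∀ (l : List (EndK K n)), (∀ x ∈ l, ∀ F ∈ gradePart' K z, x * F ∈ gradePart' K z) →
      ∀ F ∈ gradePart' K z, l.prod * F ∈ gradePart' K z := by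
  intro l
  induction l with
  | nil => intro _ F hF; rw [List.prod_nil, one_mul]; exact hF
  | cons x xs ih =>
    intro h F hF
    rw [List.prod_cons, mul_assoc]
    exact h x (List.mem_cons_self) _ (ih (fun y hy => h y (List.mem_cons_of_mem _ hy)) F hF)

lemma mul_list_prod_mem (z : Fin n → ℤ) :
    ∀ (l : List (EndK K n)), (∀ x ∈ l, ∀ F ∈ gradePart' K z, F * x ∈ gradePart' K z) →
      ∀ F ∈ gradePart' K z, F * l.prod ∈ gradePart' K z := by
  intro l
  induction l with
  | nil => intro _ F hF; rw [List.prod_nil, mul_one]; exact hF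
  | cons x xs ih =>
    intro h F hF
    rw [List.prod_cons, ← mul_assoc]
    exact ih (fun y hy F' hF' => h y (List.mem_cons_of_mem _ hy) F' hF')
      _ (h x (List.mem_cons_self) F hF)

lemma thetaEval_mul_mem (z : Fin n → ℤ) (f : MvPolynomial (Fin n) K) {F : EndK K n}
    (hF : F ∈ gradePart' K z) : thetaEval' K f * F ∈ gradePart' K z := by
  rw [thetaEval_def, Finset.sum_mul]
  refine Submodule.sum_mem _ (fun m _ => ?_)
  rw [smul_mul_assoc]
  refine Submodule.smul_mem _ _ ?_
  refine list_prod_mul_mem K z _ ?_ F hF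
  intro x hx F' hF'
  rw [List.mem_ofFn] at hx
  obtain ⟨i, rfl⟩ := hx
  exact theta_pow_mul_mem K z i _ hF'

lemma mul_thetaEval_mem (z : Fin n → ℤ) (f : MvPolynomial (Fin n) K) {F : EndK K n}
    (hF : F ∈ gradePart' K z) : F * thetaEval' K f ∈ gradePart' K z := by
  rw [thetaEval_def, Finset.mul_sum]
  refine Submodule.sum_mem _ (fun m _ => ?_)
  rw [mul_smul_comm]
  refine Submodule.smul_mem _ _ ?_
  refine mul_list_prod_mem K z _ ?_ F hF
  intro x hx F' hF'
  rw [List.mem_ofFn] at hx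
  obtain ⟨i, rfl⟩ := hx
  exact mul_theta_pow_mem K z i _ hF'

lemma midpointXD (z : Fin n → ℤ) (a b : Fin n → ℕ)
    (hab : ∀ i, (b i : ℤ) - (a i : ℤ) = z i) :
    Xpow' K a * Dpow' K b
      = Xpow' K (ez z) *
          (thetaEval' K ((List.ofFn fun i => descM K i (min (a i) (b i))).prod) *
            Dpow' K (wz z)) := by
  set c : Fin n → ℕ := fun i => min (a i) (b i) with hc
  have ha : a = ez z + c := by
    funext i
    have := hab i
    simp only [Pi.add_apply, ez, hc]
    omega
  have hb : b = c + wz z := by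
    funext i
    have := hab i
    simp only [Pi.add_apply, wz, hc]
    omega
  conv_lhs => rw [ha, hb]
  rw [← Xpow_mul_Xpow, ← Dpow_mul_Dpow, mul_assoc, ← mul_assoc (Xpow' K c), XcDc_eq]

theorem main' (z : Fin n → ℤ) :
    (∀ F : EndK K n, F ∈ gradePart' K z ↔
        ∃ f, F = thetaEval' K f * (Xpow' K (ez z) * Dpow' K (wz z))) ∧
    (∀ F : EndK K n, F ∈ gradePart' K z ↔
        ∃ f, F = Xpow' K (ez z) * Dpow' K (wz z) * thetaEval' K f) := by
  have hbase : Xpow' K (ez z) * Dpow' K (wz z) ∈ gradePart' K z := by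
    refine gen_mem K z _ _ (fun i => ?_)
    simp only [ez, wz]
    omega
  constructor
  · intro F
    constructor
    · intro hF
      refine Submodule.span_induction ?_ ?_ ?_ ?_ hF
      · rintro F ⟨a, b, hab, rfl⟩
        refine ⟨aeval (fun i => X i - C ((ez z i : K)))
          ((List.ofFn fun i => descM K i (min (a i) (b i))).prod), ?_⟩
        rw [midpointXD K z a b hab, ← mul_assoc, Xpow_thetaEval, mul_assoc]
      · exact ⟨0, by rw [thetaEval_zero, zero_mul]⟩
      · rintro x y _ _ ⟨f1, rfl⟩ ⟨f2, rfl⟩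
        exact ⟨f1 + f2, by rw [thetaEval_add, add_mul]⟩
      · rintro r x _ ⟨f, rfl⟩
        exact ⟨r • f, by rw [thetaEval_smul, smul_mul_assoc]⟩
    · rintro ⟨f, rfl⟩
      exact thetaEval_mul_mem K z f hbase
  · intro F
    constructor
    · intro hF
      refine Submodule.span_induction ?_ ?_ ?_ ?_ hF
      · rintro F ⟨a, b, hab, rfl⟩
        refine ⟨aeval (fun i => X i - C ((wz z i : K)))
          ((List.ofFn fun i => descM K i (min (a i) (b i))).prod), ?_⟩
        rw [midpointXD K z a b hab, thetaEval_Dpow, ← mul_assoc]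
      · exact ⟨0, by rw [thetaEval_zero, mul_zero]⟩
      · rintro x y _ _ ⟨f1, rfl⟩ ⟨f2, rfl⟩
        exact ⟨f1 + f2, by rw [thetaEval_add, mul_add]⟩
      · rintro r x _ ⟨f, rfl⟩
        exact ⟨r • f, by rw [thetaEval_smul, mul_smul_comm]⟩
    · rintro ⟨f, rfl⟩
      exact mul_thetaEval_mem K z f hbase

/-- For every `z ∈ ℤ^n`, the `z`-th graded part `A_n^{(z)}` equals both
`{f(θ) ∘ X^{e(z)} ∘ D^{w(z)} : f ∈ K[t_1,…,t_n]}` and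
`{X^{e(z)} ∘ D^{w(z)} ∘ f(θ) : f ∈ K[t_1,…,t_n]}`; i.e. `A_n^{(z)}` is a cyclic
`K[θ]`-bimodule generated by `X^{e(z)} ∘ D^{w(z)}`. -/
theorem graded_part_cyclic_bimodule (K : Type) [Field K] [CharZero K]
    (n : ℕ) (hn : 0 < n) (z : Fin n → ℤ) :
    (∀ F : Module.End K (MvPolynomial (Fin n) K),
        F ∈ gradePart K z ↔
          ∃ f : MvPolynomial (Fin n) K,
            F = thetaEval K f * (Xpow K (ez z) * Dpow K (wz z))) ∧
    (∀ F : Module.End K (MvPolynomial (Fin n) K),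
        F ∈ gradePart K z ↔
          ∃ f : MvPolynomial (Fin n) K,
            F = Xpow K (ez z) * Dpow K (wz z) * thetaEval K f) :=
  main' K z
end

section
/- Let ≤ be a linear order on ℤ^n that is translation-invariant (z ≤ z' implies z + w ≤ z' + w for all w). For a nonzero F ∈ A_n, write F = Σ_z F_z with F_z ∈ A_n^{(z)} (finitely many nonzero) and let topdeg(F) be the ≤-maximal z with F_z ≠ 0 and lowdeg(F) the ≤-minimal such z. Then for all nonzero P, Q ∈ A_n: the (topdeg(P)+topdeg(Q))-graded component of P ∘ Q equals P_{topdeg(P)} ∘ Q_{topdeg(Q)} and is nonzero, and the (lowdeg(P)+lowdeg(Q))-graded component of P ∘ Q equals P_{lowdeg(P)} ∘ Q_{lowdeg(Q)} and is nonzero; in particular topdeg(P∘Q) = topdeg(P) + topdeg(Q) and lowdeg(P∘Q) = lowdeg(P) + lowdeg(Q). -/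
open MvPolynomial

namespace WeylAux

open MvPolynomial Finsupp

variable {K : Type} [Field K] {n : ℕ}

noncomputable def fs (u : Fin n → ℕ) : Fin n →₀ ℕ := Finsupp.equivFunOnFinite.symm u

@[simp] lemma fs_apply (u : Fin n → ℕ) (i : Fin n) : fs u i = u i := rfl

lemma fs_coe (s : Fin n →₀ ℕ) : fs (⇑s) = s := Equiv.symm_apply_apply _ s

lemma end_ext {f g : Module.End K (MvPolynomial (Fin n) K)}
    (h : ∀ s : Fin n →₀ ℕ, f (monomial s 1) = g (monomial s 1)) : f = g := by
  apply MvPolynomial.linearMap_ext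
  intro s
  apply LinearMap.ext
  intro c
  have hm : (monomial s c : MvPolynomial (Fin n) K) = c • monomial s 1 := by
    rw [smul_monomial, smul_eq_mul, mul_one]
  simp only [LinearMap.comp_apply, hm, map_smul, h s]

lemma Xop_pow_monomial (i : Fin n) (k : ℕ) (s : Fin n →₀ ℕ) (c : K) :
    (Xop K i ^ k) (monomial s c) = monomial (s + Finsupp.single i k) c := by
  induction k generalizing s with
  | zero => simp [Finsupp.single_zero]
  | succ k ih =>
    rw [pow_succ, Module.End.mul_apply]
    have h1 : (Xop K i) (monomial s c) = monomial (s + Finsupp.single i 1) c := by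
      simp [Xop, LinearMap.mulLeft_apply, X, monomial_mul, add_comm]
    rw [h1, ih, add_assoc, ← Finsupp.single_add, add_comm 1 k]

lemma Dop_pow_monomial (i : Fin n) (k : ℕ) (s : Fin n →₀ ℕ) (c : K) :
    (Dop K i ^ k) (monomial s c)
      = monomial (s - Finsupp.single i k) (c * ((s i).descFactorial k : K)) := by
  induction k with
  | zero => simp
  | succ k ih =>
    rw [pow_succ', Module.End.mul_apply, ih]
    have : (Dop K i) (monomial (s - Finsupp.single i k) (c * ((s i).descFactorial k : K)))
        = monomial (s - Finsupp.single i k - Finsupp.single i 1)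
            (c * ((s i).descFactorial k : K) * (((s - Finsupp.single i k) i : ℕ) : K)) := by
      simp [Dop, pderiv_monomial]
    rw [this]
    have he : s - Finsupp.single i k - Finsupp.single i 1 = s - Finsupp.single i (k + 1) := by
      rw [tsub_tsub, ← Finsupp.single_add]
    have hv : (s - Finsupp.single i k) i = s i - k := by
      rw [Finsupp.tsub_apply, Finsupp.single_eq_same]
    rw [he, hv]
    congr 1
    rw [Nat.descFactorial_succ]
    push_cast [Nat.cast_mul]
    ring_nf

end WeylAux
namespace WeylAux

open MvPolynomial Finsupp

variable {K : Type} [Field K] {n : ℕ}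

lemma single_list_sum_apply (L : List (Fin n)) (b : Fin n → ℕ) (i : Fin n) (hi : i ∉ L) :
    (L.map fun j => (Finsupp.single j (b j) : Fin n →₀ ℕ)).sum i = 0 := by
  induction L with
  | nil => simp
  | cons j L ih =>
    rw [List.mem_cons, not_or] at hi
    simp only [List.map_cons, List.sum_cons, Finsupp.add_apply]
    rw [Finsupp.single_apply, if_neg (fun h => hi.1 h.symm), ih hi.2, add_zero]

lemma prod_map_D_monomial (L : List (Fin n)) (hL : L.Nodup) (b : Fin n → ℕ)
    (s : Fin n →₀ ℕ) (c : K) :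
    (L.map fun i => Dop K i ^ b i).prod (monomial s c)
      = monomial (s - (L.map fun i => (Finsupp.single i (b i) : Fin n →₀ ℕ)).sum)
          (c * ((L.map fun i => (s i).descFactorial (b i)).prod : ℕ)) := by
  induction L with
  | nil => simp
  | cons i L ih =>
    obtain ⟨hi, hL'⟩ := List.nodup_cons.mp hL
    simp only [List.map_cons, List.prod_cons, List.sum_cons, Module.End.mul_apply]
    rw [ih hL', Dop_pow_monomial]
    have h1 : (s - (L.map fun j => (Finsupp.single j (b j) : Fin n →₀ ℕ)).sum) i = s i := by
      rw [Finsupp.tsub_apply, single_list_sum_apply L b i hi, Nat.sub_zero]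
    rw [h1, tsub_tsub]
    have h2 : (L.map fun j => (Finsupp.single j (b j) : Fin n →₀ ℕ)).sum + Finsupp.single i (b i)
        = Finsupp.single i (b i) + (L.map fun j => (Finsupp.single j (b j) : Fin n →₀ ℕ)).sum := by
      abel
    rw [h2]
    congr 1
    push_cast
    ring

lemma prod_map_X_monomial (L : List (Fin n)) (a : Fin n → ℕ) (s : Fin n →₀ ℕ) (c : K) :
    (L.map fun i => Xop K i ^ a i).prod (monomial s c)
      = monomial (s + (L.map fun i => (Finsupp.single i (a i) : Fin n →₀ ℕ)).sum) c := by
  induction L with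
  | nil => simp
  | cons i L ih =>
    simp only [List.map_cons, List.prod_cons, List.sum_cons, Module.End.mul_apply]
    rw [ih, Xop_pow_monomial]
    have h2 : s + (L.map fun j => (Finsupp.single j (a j) : Fin n →₀ ℕ)).sum + Finsupp.single i (a i)
        = s + (Finsupp.single i (a i) + (L.map fun j => (Finsupp.single j (a j) : Fin n →₀ ℕ)).sum) := by
      abel
    rw [h2]

lemma sum_single_eq_fs (b : Fin n → ℕ) :
    ((List.finRange n).map fun i => (Finsupp.single i (b i) : Fin n →₀ ℕ)).sum = fs b := by
  ext j
  rw [← List.ofFn_eq_map, List.sum_ofFn]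
  rw [Finsupp.finset_sum_apply]
  simp [Finsupp.single_apply]

lemma Dpow_monomial (b : Fin n → ℕ) (s : Fin n →₀ ℕ) (c : K) :
    Dpow K b (monomial s c)
      = monomial (s - fs b) (c * ((∏ i, (s i).descFactorial (b i) : ℕ) : K)) := by
  rw [Dpow, List.ofFn_eq_map, prod_map_D_monomial _ (List.nodup_finRange n), sum_single_eq_fs]
  have h : ((List.finRange n).map fun i => (s i).descFactorial (b i)).prod
      = ∏ i, (s i).descFactorial (b i) := by
    rw [← List.ofFn_eq_map, List.prod_ofFn]
  rw [h]

lemma Xpow_monomial (a : Fin n → ℕ) (s : Fin n →₀ ℕ) (c : K) :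
    Xpow K a (monomial s c) = monomial (s + fs a) c := by
  rw [Xpow, List.ofFn_eq_map, prod_map_X_monomial, sum_single_eq_fs]

lemma cast_descF (m k : ℕ) :
    ((m.descFactorial k : ℕ) : K) = ∏ j ∈ Finset.range k, ((m : K) - (j : K)) := by
  induction k with
  | zero => simp
  | succ k ih =>
    rw [Nat.descFactorial_succ, Finset.prod_range_succ, ← ih]
    rcases le_or_gt k m with h | h
    · push_cast [Nat.cast_sub h]
      ring
    · have h0 : m.descFactorial k = 0 := Nat.descFactorial_eq_zero_iff_lt.mpr h
      simp [h0]

end WeylAux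
namespace WeylAux

open MvPolynomial Finsupp

variable {K : Type} [Field K] {n : ℕ}

noncomputable def evalN (f : MvPolynomial (Fin n) K) (u : Fin n → ℕ) : K :=
  eval (fun i => (u i : K)) f

lemma evalN_mul (f g : MvPolynomial (Fin n) K) (u : Fin n → ℕ) :
    evalN (f * g) u = evalN f u * evalN g u := map_mul _ _ _

lemma evalN_zero (u : Fin n → ℕ) : evalN (0 : MvPolynomial (Fin n) K) u = 0 := map_zero _

lemma evalN_add (f g : MvPolynomial (Fin n) K) (u : Fin n → ℕ) :
    evalN (f + g) u = evalN f u + evalN g u := map_add _ _ _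

lemma evalN_smul (c : K) (f : MvPolynomial (Fin n) K) (u : Fin n → ℕ) :
    evalN (c • f) u = c * evalN f u := by
  rw [evalN, smul_eq_C_mul, map_mul, eval_C]; rfl

def sh (z : Fin n → ℤ) (u : Fin n → ℕ) : Fin n → ℕ := fun i => ((u i : ℤ) - z i).toNat

def PLw (z : Fin n → ℤ) (F : Module.End K (MvPolynomial (Fin n) K))
    (f : MvPolynomial (Fin n) K) : Prop :=
  (∀ u : Fin n → ℕ, F (monomial (fs u) 1) = monomial (fs (sh z u)) (evalN f u)) ∧
  (∀ u : Fin n → ℕ, (∃ i, (u i : ℤ) < z i) → evalN f u = 0)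

def PL (z : Fin n → ℤ) (F : Module.End K (MvPolynomial (Fin n) K)) : Prop :=
  ∃ f, PLw z F f

lemma evalN_genPoly (b : Fin n → ℕ) (u : Fin n → ℕ) :
    evalN (∏ i, ∏ j ∈ Finset.range (b i), (X i - C (j : K))) u
      = ((∏ i, (u i).descFactorial (b i) : ℕ) : K) := by
  rw [evalN, map_prod, Nat.cast_prod]
  refine Finset.prod_congr rfl fun i _ => ?_
  rw [map_prod, cast_descF]
  refine Finset.prod_congr rfl fun j _ => ?_
  simp

lemma PLw_gen (a b : Fin n → ℕ) (z : Fin n → ℤ) (hz : ∀ i, (b i : ℤ) - a i = z i) :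
    PLw z (Xpow K a * Dpow K b) (∏ i, ∏ j ∈ Finset.range (b i), (X i - C (j : K))) := by
  constructor
  · intro u
    rw [Module.End.mul_apply, Dpow_monomial, Xpow_monomial, evalN_genPoly, one_mul]
    simp only [fs_apply]
    by_cases hub : ∀ i, b i ≤ u i
    · have he : fs u - fs b + fs a = fs (sh z u) := by
        ext i
        simp only [Finsupp.add_apply, Finsupp.tsub_apply, fs_apply, sh]
        have := hz i
        have := hub i
        omega
      rw [he]
    · push_neg at hub
      obtain ⟨i, hi⟩ := hub
      have hp : (∏ i, (u i).descFactorial (b i)) = 0 :=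
        Finset.prod_eq_zero (Finset.mem_univ i) (Nat.descFactorial_eq_zero_iff_lt.mpr hi)
      simp only [hp, Nat.cast_zero, map_zero]
  · intro u ⟨i, hi⟩
    rw [evalN_genPoly]
    have hub : u i < b i := by have := hz i; omega
    have hp : (∏ i, (u i).descFactorial (b i)) = 0 :=
      Finset.prod_eq_zero (Finset.mem_univ i) (Nat.descFactorial_eq_zero_iff_lt.mpr hub)
    rw [hp]
    simp

lemma PLw_zero (z : Fin n → ℤ) : PLw (K := K) (n := n) z 0 0 := by
  constructor
  · intro u; simp [evalN_zero]
  · intro u _; exact evalN_zero u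

lemma PLw_add {z F G f g} (hF : PLw (K := K) (n := n) z F f) (hG : PLw z G g) :
    PLw z (F + G) (f + g) := by
  constructor
  · intro u
    rw [LinearMap.add_apply, hF.1 u, hG.1 u, evalN_add, map_add]
  · intro u hu
    rw [evalN_add, hF.2 u hu, hG.2 u hu, add_zero]

lemma PLw_smul {z F f} (c : K) (hF : PLw (K := K) (n := n) z F f) :
    PLw z (c • F) (c • f) := by
  constructor
  · intro u
    rw [LinearMap.smul_apply, hF.1 u, evalN_smul, smul_monomial, smul_eq_mul]
  · intro u hu
    rw [evalN_smul, hF.2 u hu, mul_zero]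

lemma PL_zero (z : Fin n → ℤ) : PL (K := K) (n := n) z 0 := ⟨0, PLw_zero z⟩

lemma PL_add {z F G} (hF : PL (K := K) (n := n) z F) (hG : PL z G) : PL z (F + G) := by
  obtain ⟨f, hf⟩ := hF; obtain ⟨g, hg⟩ := hG; exact ⟨f + g, PLw_add hf hg⟩

lemma PL_smul {z F} (c : K) (hF : PL (K := K) (n := n) z F) : PL z (c • F) := by
  obtain ⟨f, hf⟩ := hF; exact ⟨c • f, PLw_smul c hf⟩

lemma PL_neg {z F} (hF : PL (K := K) (n := n) z F) : PL z (-F) := by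
  have := PL_smul (-1) hF; rwa [neg_one_smul K F] at this

lemma PL_of_mem_gradePart {z : Fin n → ℤ} {F} (h : F ∈ gradePart K z) : PL z F := by
  refine Submodule.span_induction (p := fun F _ => PL z F) ?_ (PL_zero z)
    (fun x y _ _ hx hy => PL_add hx hy) (fun c x _ hx => PL_smul c hx) h
  rintro F ⟨a, b, hab, rfl⟩
  exact ⟨_, PLw_gen a b z hab⟩

lemma PL_sum {z : Fin n → ℤ} {ι : Type*} (s : Finset ι)
    (G : ι → Module.End K (MvPolynomial (Fin n) K)) (h : ∀ i ∈ s, PL z (G i)) :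
    PL z (∑ i ∈ s, G i) := by
  classical
  induction s using Finset.induction_on with
  | empty => simpa using PL_zero z
  | insert _ _ hnotmem ih =>
    rw [Finset.sum_insert hnotmem]
    exact PL_add (h _ (Finset.mem_insert_self _ _))
      (ih fun i hi => h i (Finset.mem_insert_of_mem hi))

end WeylAux
namespace WeylAux

open MvPolynomial Finsupp

variable {K : Type} [Field K] {n : ℕ}

lemma grid [CharZero K] : ∀ {m : ℕ} (f : MvPolynomial (Fin m) K),
    (∀ u : Fin m → ℕ, eval (fun i => (u i : K)) f = 0) → f = 0
  | 0, f, h => by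
    obtain ⟨c, rfl⟩ := C_surjective (Fin 0) f
    simpa using h (fun _ => 0)
  | (m + 1), f, h => by
    apply (finSuccEquiv K m).injective
    rw [map_zero]
    apply Polynomial.ext
    intro j
    rw [Polynomial.coeff_zero]
    apply grid (m := m)
    intro v
    have hp : Polynomial.map (eval fun i => (v i : K)) (finSuccEquiv K m f) = 0 := by
      apply Polynomial.eq_zero_of_infinite_isRoot
      apply Set.infinite_of_injective_forall_mem (f := fun k : ℕ => (k : K))
      case hi => exact fun a b hab => Nat.cast_injective hab
      case hf =>
        intro k
        simp only [Set.mem_setOf_eq, Polynomial.IsRoot]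
        rw [← eval_eq_eval_mv_eval']
        have hc : (Fin.cons ((k : ℕ) : K) (fun i => (v i : K)) : Fin (m + 1) → K)
            = fun i => (((Fin.cons k v : Fin (m + 1) → ℕ) i : ℕ) : K) := by
          funext i
          refine Fin.cases ?_ ?_ i <;> simp
        rw [hc]
        exact h _
    have := congrArg (fun p => Polynomial.coeff p j) hp
    simpa [Polynomial.coeff_map] using this

lemma aeval_eq_eval' (y : Fin n → K) (p : MvPolynomial (Fin n) K) :
    aeval y p = eval y p := by
  rw [aeval_def, Algebra.algebraMap_self]
  rfl

lemma eval_congr (f : MvPolynomial (Fin n) K) {x y : Fin n → K} (h : ∀ i, x i = y i) :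
    eval x f = eval y f := by
  rw [show x = y from funext h]

lemma eval_bind₁' (x : Fin n → K) (g : Fin n → MvPolynomial (Fin n) K)
    (φ : MvPolynomial (Fin n) K) :
    eval x (bind₁ g φ) = eval (fun i => eval x (g i)) φ := by
  have h := aeval_bind₁ x g φ
  rw [aeval_eq_eval'] at h
  rw [h, aeval_eq_eval']
  exact eval_congr φ fun i => aeval_eq_eval' x (g i)

noncomputable def shiftPoly (w : Fin n → ℤ) (f : MvPolynomial (Fin n) K) :
    MvPolynomial (Fin n) K :=
  bind₁ (fun i => X i - C ((w i : ℤ) : K)) f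

lemma eval_shiftPoly (w : Fin n → ℤ) (f : MvPolynomial (Fin n) K) (x : Fin n → K) :
    eval x (shiftPoly w f) = eval (fun i => x i - ((w i : ℤ) : K)) f := by
  rw [shiftPoly, eval_bind₁']
  refine eval_congr f fun i => ?_
  simp

lemma shiftPoly_ne_zero {w : Fin n → ℤ} {f : MvPolynomial (Fin n) K} (hf : f ≠ 0) :
    shiftPoly w f ≠ 0 := by
  intro h
  apply hf
  have h2 : bind₁ (fun i => X i + C ((w i : ℤ) : K)) (shiftPoly w f) = f := by
    rw [shiftPoly, bind₁_bind₁]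
    have hX : (fun i => bind₁ (fun i => (X i : MvPolynomial (Fin n) K) + C ((w i : ℤ) : K))
        ((X i : MvPolynomial (Fin n) K) - C ((w i : ℤ) : K)))
        = (X : Fin n → MvPolynomial (Fin n) K) := by
      funext i
      rw [map_sub, bind₁_X_right, bind₁_C_right]
      ring
    rw [hX, bind₁_X_left]
    rfl
  rw [h, map_zero] at h2
  exact h2.symm

lemma PLw_mul {z w : Fin n → ℤ} {F G : Module.End K (MvPolynomial (Fin n) K)}
    {f g : MvPolynomial (Fin n) K} (hF : PLw z F f) (hG : PLw w G g) :
    PLw (z + w) (F * G) (g * shiftPoly w f) := by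
  obtain ⟨hF1, hF2⟩ := hF
  obtain ⟨hG1, hG2⟩ := hG
  have hcast : ∀ u : Fin n → ℕ, (∀ i, (w i : ℤ) ≤ (u i : ℤ)) →
      evalN f (sh w u) = eval (fun i => (u i : K) - ((w i : ℤ) : K)) f := by
    intro u hw
    rw [evalN]
    refine eval_congr f fun i => ?_
    have h0 : ((sh w u i : ℕ) : ℤ) = (u i : ℤ) - w i := by
      simp only [sh]
      have := hw i
      omega
    calc ((sh w u i : ℕ) : K) = (((sh w u i : ℕ) : ℤ) : K) := (Int.cast_natCast _).symm
      _ = (((u i : ℤ) - w i : ℤ) : K) := by rw [h0]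
      _ = (u i : K) - ((w i : ℤ) : K) := by push_cast; ring
  have hprod : ∀ u : Fin n → ℕ, (∀ i, (w i : ℤ) ≤ (u i : ℤ)) →
      evalN (g * shiftPoly w f) u = evalN g u * evalN f (sh w u) := by
    intro u hw
    rw [evalN_mul]
    congr 1
    rw [hcast u hw, evalN, eval_shiftPoly]
  constructor
  · intro u
    rw [Module.End.mul_apply, hG1 u]
    have hsm : (monomial (fs (sh w u))) (evalN g u)
        = evalN g u • monomial (fs (sh w u)) 1 := by
      rw [smul_monomial, smul_eq_mul, mul_one]
    rw [hsm, map_smul, hF1 (sh w u), smul_monomial, smul_eq_mul]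
    by_cases hw : ∀ i, (w i : ℤ) ≤ (u i : ℤ)
    · rw [hprod u hw]
      by_cases hz' : ∀ i, z i ≤ ((sh w u) i : ℤ)
      · have he : fs (sh z (sh w u)) = fs (sh (z + w) u) := by
          ext i
          simp only [fs_apply, sh, Pi.add_apply]
          have h1 := hw i
          have h2 := hz' i
          simp only [sh] at h2
          omega
        rw [he]
      · push_neg at hz'
        obtain ⟨i, hi⟩ := hz'
        rw [hF2 _ ⟨i, hi⟩, mul_zero, map_zero, map_zero]
    · push_neg at hw
      obtain ⟨i, hi⟩ := hw
      have hg0 : evalN g u = 0 := hG2 _ ⟨i, hi⟩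
      have h0 : evalN (g * shiftPoly w f) u = 0 := by
        rw [evalN_mul, hg0, zero_mul]
      rw [hg0, h0, zero_mul, map_zero, map_zero]
  · intro u hu
    obtain ⟨i, hi⟩ := hu
    simp only [Pi.add_apply] at hi
    by_cases hw : ∀ j, (w j : ℤ) ≤ (u j : ℤ)
    · rw [hprod u hw]
      have h0 : evalN f (sh w u) = 0 := by
        apply hF2
        refine ⟨i, ?_⟩
        simp only [sh]
        have := hw i
        omega
      rw [h0, mul_zero]
    · push_neg at hw
      obtain ⟨j, hj⟩ := hw
      rw [evalN_mul, hG2 _ ⟨j, hj⟩, zero_mul]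

lemma PLw_zero_iff [CharZero K] {z : Fin n → ℤ} {F : Module.End K (MvPolynomial (Fin n) K)}
    {f : MvPolynomial (Fin n) K} (h : PLw z F f) : F = 0 ↔ f = 0 := by
  constructor
  · intro hF
    apply grid
    intro u
    have h1 := h.1 u
    rw [hF] at h1
    simp only [LinearMap.zero_apply] at h1
    exact monomial_eq_zero.mp h1.symm
  · intro hf
    apply end_ext (g := 0)
    intro s
    rw [← fs_coe s, h.1]
    simp [hf, evalN_zero]

end WeylAux
namespace WeylAux

open MvPolynomial Finsupp

variable {K : Type} [Field K] {n : ℕ}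

lemma PL_sub {z : Fin n → ℤ} {F G : Module.End K (MvPolynomial (Fin n) K)}
    (hF : PL z F) (hG : PL z G) : PL z (F - G) := by
  rw [sub_eq_add_neg]
  exact PL_add hF (PL_neg hG)

lemma uniq [CharZero K] (s : Finset (Fin n → ℤ))
    (G : (Fin n → ℤ) → Module.End K (MvPolynomial (Fin n) K))
    (hG : ∀ y, PL y (G y)) (h0 : ∀ y ∉ s, G y = 0)
    (hsum : ∑ y ∈ s, G y = 0) : ∀ y, G y = 0 := by
  classical
  choose f hf using hG
  intro y0
  by_cases hy0 : y0 ∈ s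
  swap
  · exact h0 y0 hy0
  rw [PLw_zero_iff (hf y0)]
  apply grid
  intro u
  show evalN (f y0) u = 0
  by_cases hneg : ∃ i, (u i : ℤ) < y0 i
  · exact (hf y0).2 u hneg
  push_neg at hneg
  have happ : ∑ y ∈ s, monomial (fs (sh y u)) (evalN (f y) u) = 0 := by
    have h1 := congrArg
      (fun (F : Module.End K (MvPolynomial (Fin n) K)) => F (monomial (fs u) 1)) hsum
    simp only [LinearMap.zero_apply] at h1
    rw [← h1, LinearMap.sum_apply]
    refine Finset.sum_congr rfl fun y _ => ((hf y).1 u).symm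
  have hco := congrArg (fun p => coeff (fs (sh y0 u)) p) happ
  simp only [coeff_zero, coeff_sum] at hco
  rw [Finset.sum_eq_single y0 ?h0' ?h1'] at hco
  case h0' =>
    intro y _ hy
    rcases em (∃ i, (u i : ℤ) < y i) with hex | hnot
    · rw [(hf y).2 u hex, map_zero, coeff_zero]
    · push_neg at hnot
      rw [coeff_monomial, if_neg]
      intro hEq
      apply hy
      funext i
      have h1 := DFunLike.congr_fun hEq i
      simp only [fs_apply, sh] at h1
      have h2 := hnot i
      have h3 := hneg i
      omega
  case h1' => intro h; exact absurd hy0 h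
  rw [coeff_monomial, if_pos rfl] at hco
  exact hco

lemma key [CharZero K]
    (r : (Fin n → ℤ) → (Fin n → ℤ) → Prop) (hlin : IsLinearOrder (Fin n → ℤ) r)
    (hmono : ∀ z z' w : Fin n → ℤ, r z z' → r (z + w) (z' + w))
    (Pc Qc Rc : (Fin n → ℤ) →₀ Module.End K (MvPolynomial (Fin n) K))
    (hconv : ∀ y, Rc y = ∑ z ∈ Pc.support, Pc z * Qc (y - z))
    (hPg : ∀ z, PL (K := K) z (Pc z)) (hQg : ∀ z, PL (K := K) z (Qc z))
    (tP tQ : Fin n → ℤ)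
    (htP : Pc tP ≠ 0 ∧ ∀ z, Pc z ≠ 0 → r z tP)
    (htQ : Qc tQ ≠ 0 ∧ ∀ z, Qc z ≠ 0 → r z tQ) :
    (Rc (tP + tQ) = Pc tP * Qc tQ ∧ Rc (tP + tQ) ≠ 0) ∧
      (∀ z, Rc z ≠ 0 → r z (tP + tQ)) := by
  haveI := hlin
  have heq : Rc (tP + tQ) = Pc tP * Qc tQ := by
    rw [hconv (tP + tQ)]
    rw [Finset.sum_eq_single tP ?h0' ?h1']
    · rw [show tP + tQ - tP = tQ by abel]
    case h0' =>
      intro z hzm hzne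
      have hpz : Pc z ≠ 0 := Finsupp.mem_support_iff.mp hzm
      suffices h : Qc (tP + tQ - z) = 0 by rw [h, mul_zero]
      by_contra hq
      have h1 : r (tP + tQ - z) tQ := htQ.2 _ hq
      have h2 : r z tP := htP.2 _ hpz
      have h3 : r (tP + tQ - z + z) (tQ + z) := hmono _ _ z h1
      rw [show tP + tQ - z + z = tP + tQ by abel, show tQ + z = z + tQ by abel] at h3
      have h4 : r (z + tQ) (tP + tQ) := hmono _ _ tQ h2
      have h5 : z + tQ = tP + tQ := Std.Antisymm.antisymm _ _ h4 h3
      exact hzne (add_right_cancel h5)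
    case h1' =>
      intro h
      exact absurd (Finsupp.mem_support_iff.mpr htP.1) h
  obtain ⟨fP, hfP⟩ := hPg tP
  obtain ⟨fQ, hfQ⟩ := hQg tQ
  have hPne : fP ≠ 0 := fun h => htP.1 ((PLw_zero_iff hfP).mpr h)
  have hQne : fQ ≠ 0 := fun h => htQ.1 ((PLw_zero_iff hfQ).mpr h)
  have hne : Pc tP * Qc tQ ≠ 0 := by
    intro h
    exact mul_ne_zero hQne (shiftPoly_ne_zero hPne) ((PLw_zero_iff (PLw_mul hfP hfQ)).mp h)
  refine ⟨⟨heq, heq ▸ hne⟩, ?_⟩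
  intro z hz
  rw [hconv z] at hz
  obtain ⟨z1, hz1m, hz1⟩ := Finset.exists_ne_zero_of_sum_ne_zero hz
  have hp1 : Pc z1 ≠ 0 := Finsupp.mem_support_iff.mp hz1m
  have hq1 : Qc (z - z1) ≠ 0 := fun h => hz1 (by rw [h, mul_zero])
  have h1 : r (z - z1 + z1) (tQ + z1) := hmono _ _ z1 (htQ.2 _ hq1)
  rw [show z - z1 + z1 = z by abel, show tQ + z1 = z1 + tQ by abel] at h1
  have h2 : r (z1 + tQ) (tP + tQ) := hmono _ _ tQ (htP.2 _ hp1)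
  exact IsTrans.trans _ _ _ h1 h2

end WeylAux

/-- Let `r` be a translation-invariant linear order on `ℤ^n`.  For
nonzero `P, Q ∈ A_n` with graded decompositions `P = Σ_z Pc z`, `Q = Σ_z Qc z` and any
graded decomposition `Rc` of `P ∘ Q`, the component of `P ∘ Q` in degree
`topdeg(P)+topdeg(Q)` equals `P_{topdeg P} ∘ Q_{topdeg Q}` and is nonzero, similarly for
the lowest degrees; in particular `topdeg(P∘Q) = topdeg(P)+topdeg(Q)` and
`lowdeg(P∘Q) = lowdeg(P)+lowdeg(Q)`. -/
theorem graded_top_low_degree_multiplicative (K : Type) [Field K] [CharZero K]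
    (n : ℕ) (hn : 0 < n)
    (r : (Fin n → ℤ) → (Fin n → ℤ) → Prop) (hlin : IsLinearOrder (Fin n → ℤ) r)
    (hmono : ∀ z z' w : Fin n → ℤ, r z z' → r (z + w) (z' + w))
    (P Q : Module.End K (MvPolynomial (Fin n) K)) (hP0 : P ≠ 0) (hQ0 : Q ≠ 0)
    (Pc Qc Rc : (Fin n → ℤ) →₀ Module.End K (MvPolynomial (Fin n) K))
    (hPg : ∀ z, Pc z ∈ gradePart K z) (hQg : ∀ z, Qc z ∈ gradePart K z)
    (hRg : ∀ z, Rc z ∈ gradePart K z)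
    (hPsum : P = Pc.sum fun _ F => F) (hQsum : Q = Qc.sum fun _ F => F)
    (hRsum : P * Q = Rc.sum fun _ F => F)
    (tP lP tQ lQ : Fin n → ℤ)
    (htP : Pc tP ≠ 0 ∧ ∀ z, Pc z ≠ 0 → r z tP)
    (hlP : Pc lP ≠ 0 ∧ ∀ z, Pc z ≠ 0 → r lP z)
    (htQ : Qc tQ ≠ 0 ∧ ∀ z, Qc z ≠ 0 → r z tQ)
    (hlQ : Qc lQ ≠ 0 ∧ ∀ z, Qc z ≠ 0 → r lQ z) :
    (Rc (tP + tQ) = Pc tP * Qc tQ ∧ Rc (tP + tQ) ≠ 0) ∧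
    (Rc (lP + lQ) = Pc lP * Qc lQ ∧ Rc (lP + lQ) ≠ 0) ∧
    (∀ z, Rc z ≠ 0 → r z (tP + tQ)) ∧
    (∀ z, Rc z ≠ 0 → r (lP + lQ) z) := by
  classical
  have hPL_P : ∀ z, WeylAux.PL (K := K) z (Pc z) := fun z => WeylAux.PL_of_mem_gradePart (hPg z)
  have hPL_Q : ∀ z, WeylAux.PL (K := K) z (Qc z) := fun z => WeylAux.PL_of_mem_gradePart (hQg z)
  have hPL_R : ∀ z, WeylAux.PL (K := K) z (Rc z) := fun z => WeylAux.PL_of_mem_gradePart (hRg z)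
  set s : Finset (Fin n → ℤ) := Rc.support ∪ Finset.image₂ (· + ·) Pc.support Qc.support with hs
  set G : (Fin n → ℤ) → Module.End K (MvPolynomial (Fin n) K) :=
    fun y => Rc y - ∑ z ∈ Pc.support, Pc z * Qc (y - z) with hGdef
  have hGPL : ∀ y, WeylAux.PL y (G y) := by
    intro y
    apply WeylAux.PL_sub (hPL_R y)
    apply WeylAux.PL_sum
    intro z _
    obtain ⟨f1, h1⟩ := hPL_P z
    obtain ⟨f2, h2⟩ := hPL_Q (y - z)
    have h3 := WeylAux.PLw_mul h1 h2
    rw [show z + (y - z) = y by abel] at h3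
    exact ⟨_, h3⟩
  have hG0 : ∀ y ∉ s, G y = 0 := by
    intro y hy
    rw [hs, Finset.mem_union, not_or] at hy
    have hR0 : Rc y = 0 := Finsupp.notMem_support_iff.mp hy.1
    have hterm : ∀ z ∈ Pc.support, Pc z * Qc (y - z) = 0 := by
      intro z hzm
      have hq : Qc (y - z) = 0 := by
        by_contra hq
        apply hy.2
        have hmem : y - z ∈ Qc.support := Finsupp.mem_support_iff.mpr hq
        have : z + (y - z) ∈ Finset.image₂ (· + ·) Pc.support Qc.support :=
          Finset.mem_image₂_of_mem hzm hmem
        rwa [show z + (y - z) = y by abel] at this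
      rw [hq, mul_zero]
    rw [hGdef]
    simp only
    rw [hR0, Finset.sum_eq_zero hterm, sub_zero]
  have hRs : ∑ y ∈ s, Rc y = P * Q := by
    rw [hRsum]
    exact (Finset.sum_subset Finset.subset_union_left
      fun y _ hy => Finsupp.notMem_support_iff.mp hy).symm
  have hQs : ∀ z ∈ Pc.support, ∑ y ∈ s, Qc (y - z) = Q := by
    intro z hzm
    have himg : ∑ y ∈ s, Qc (y - z) = ∑ w ∈ s.image (fun y => y - z), Qc w := by
      rw [Finset.sum_image]
      intro x _ y _ hxy
      exact sub_left_inj.mp hxy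
    rw [himg, hQsum]
    refine (Finset.sum_subset ?_ ?_).symm
    · intro w hw
      refine Finset.mem_image.mpr ⟨z + w, ?_, by abel⟩
      exact Finset.mem_union_right _ (Finset.mem_image₂_of_mem hzm hw)
    · exact fun w _ hw => Finsupp.notMem_support_iff.mp hw
  have hGsum : ∑ y ∈ s, G y = 0 := by
    rw [hGdef]
    simp only
    rw [Finset.sum_sub_distrib, hRs, Finset.sum_comm]
    have hc : ∑ z ∈ Pc.support, ∑ y ∈ s, Pc z * Qc (y - z) = P * Q := by
      calc ∑ z ∈ Pc.support, ∑ y ∈ s, Pc z * Qc (y - z)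
          = ∑ z ∈ Pc.support, Pc z * ∑ y ∈ s, Qc (y - z) := by
            exact Finset.sum_congr rfl fun z _ => (Finset.mul_sum _ _ _).symm
        _ = ∑ z ∈ Pc.support, Pc z * Q :=
            Finset.sum_congr rfl fun z hz => by rw [hQs z hz]
        _ = (∑ z ∈ Pc.support, Pc z) * Q := by rw [Finset.sum_mul]
        _ = P * Q := by rw [hPsum]; rfl
    rw [hc, sub_self]
  have hconv : ∀ y, Rc y = ∑ z ∈ Pc.support, Pc z * Qc (y - z) := by
    intro y
    have h := WeylAux.uniq s G hGPL hG0 hGsum y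
    rw [hGdef] at h
    simp only at h
    exact sub_eq_zero.mp h
  have top := WeylAux.key r hlin hmono Pc Qc Rc hconv hPL_P hPL_Q tP tQ htP htQ
  have hlin' : IsLinearOrder (Fin n → ℤ) (Function.swap r) := by
    haveI := hlin
    exact inferInstance
  have low := WeylAux.key (Function.swap r) hlin'
    (fun z z' w h => hmono _ _ w h) Pc Qc Rc hconv hPL_P hPL_Q lP lQ
    ⟨hlP.1, fun z hz => hlP.2 z hz⟩ ⟨hlQ.1, fun z hz => hlQ.2 z hz⟩
  exact ⟨top.1, low.1, top.2, fun z hz => low.2 z hz⟩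
end
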